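/- Let U > 0, ε ∈ (0,1), and define π(n) = (1 − ε^n)·U − n·p for n ∈ ℕ. (i) If 0 < p ≤ (1 − ε)·U, then n* = ⌊log_ε( ε·p / ((1−ε)·U) )⌋ (where log_ε x = ln x / ln ε and ⌊·⌋ is the floor function) satisfies n* ≥ 1 and π(n*) ≥ π(n) for all n ∈ ℕ. (ii) If p > (1 − ε)·U, then π(0) ≥ π(n) for all n ∈ ℕ, i.e., n* = 0 is optimal. -/
import Mathlib

private lemma up_to (f : ℕ → ℝ) : ∀ N : ℕ, (∀ k, k < N → f k ≤ f (k+1)) →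
    ∀ n, n ≤ N → f n ≤ f N := by
  intro N
  induction N with
  | zero => intro _ n hn; simp_all
  | succ N ih =>
    intro h n hn
    rcases Nat.lt_succ_iff_lt_or_eq.mp (Nat.lt_succ_of_le hn) with h' | h'
    · exact le_trans (ih (fun k hk => h k (hk.trans (Nat.lt_succ_self N)))
        n (Nat.lt_succ_iff.mp h')) (h N (Nat.lt_succ_self N))
    · subst h'; exact le_refl _

private lemma from_on (f : ℕ → ℝ) (N : ℕ) (h : ∀ k, N ≤ k → f (k+1) ≤ f k) :
    ∀ n, N ≤ n → f n ≤ f N := by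
  intro n hn
  induction n with
  | zero => simp_all
  | succ n ih =>
    rcases Nat.le_succ_iff.mp hn with h' | h'
    · exact le_trans (h n h') (ih h')
    · subst h'; exact le_refl _

/-- Theorem 1 of the paper: with payoff `π n = (1 - ε^n)·U - n·p`,
(i) if `0 < p ≤ (1-ε)·U` then `n* = ⌊log_ε(ε p /((1-ε)U))⌋` satisfies `n* ≥ 1`
and maximizes `π` over `ℕ`; (ii) if `p > (1-ε)·U` then `n* = 0` maximizes `π`. -/
theorem optimal_prompt_number
    (U p ε : ℝ) (hU : 0 < U) (hε : ε ∈ Set.Ioo (0 : ℝ) 1)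
    (π : ℕ → ℝ) (hπ : ∀ n : ℕ, π n = (1 - ε ^ n) * U - n * p) :
    (0 < p → p ≤ (1 - ε) * U →
      1 ≤ ⌊Real.logb ε (ε * p / ((1 - ε) * U))⌋₊ ∧
      ∀ n : ℕ, π n ≤ π ⌊Real.logb ε (ε * p / ((1 - ε) * U))⌋₊) ∧
    ((1 - ε) * U < p → ∀ n : ℕ, π n ≤ π 0) := by
  obtain ⟨hε0, hε1⟩ := hε
  have h1ε : 0 < 1 - ε := by linarith
  have hden : 0 < (1 - ε) * U := mul_pos h1ε hU
  constructor
  · intro hp hple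
    set X : ℝ := p / ((1 - ε) * U) with hX
    have hX0 : 0 < X := div_pos hp hden
    have hX1 : X ≤ 1 := (div_le_one hden).mpr hple
    set L : ℝ := Real.logb ε X with hL
    have hlogε : Real.log ε < 0 := Real.log_neg hε0 hε1
    have hL0 : 0 ≤ L := by
      rw [hL, Real.logb, div_nonneg_iff]
      right
      exact ⟨Real.log_nonpos hX0.le hX1, hlogε.le⟩
    -- the argument of the floor equals L + 1
    have harg : Real.logb ε (ε * p / ((1 - ε) * U)) = L + 1 := by
      have : ε * p / ((1 - ε) * U) = ε * X := by rw [hX]; ring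
      have hself : Real.logb ε ε = 1 := by
        rw [Real.logb]; exact div_self hlogε.ne
      rw [this, Real.logb_mul (ne_of_gt hε0) (ne_of_gt hX0), hself]
      ring
    have hfloor : ⌊Real.logb ε (ε * p / ((1 - ε) * U))⌋₊ = ⌊L⌋₊ + 1 := by
      rw [harg, Nat.floor_add_one hL0]
    -- increments
    have hinc : ∀ n : ℕ, π (n+1) = π n + (ε ^ n * ((1 - ε) * U) - p) := by
      intro n
      rw [hπ, hπ]
      push_cast
      ring
    -- the key equivalence: (n : ℝ) ≤ L ↔ X ≤ ε ^ n
    have hkey : ∀ n : ℕ, ((n : ℝ) ≤ L ↔ X ≤ ε ^ n) := by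
      intro n
      rw [hL, Real.logb, le_div_iff_of_neg hlogε]
      rw [show (n : ℝ) * Real.log ε = Real.log (ε ^ n) by rw [Real.log_pow]]
      exact Real.log_le_log_iff hX0 (pow_pos hε0 n)
    refine ⟨by rw [hfloor]; omega, ?_⟩
    intro n
    rw [hfloor]
    rcases le_or_gt n (⌊L⌋₊ + 1) with hn | hn
    · refine up_to π (⌊L⌋₊ + 1) ?_ n hn
      intro k hk
      rw [hinc k]
      have hkL : (k : ℝ) ≤ L := by
        have : k ≤ ⌊L⌋₊ := by omega
        exact (Nat.le_floor_iff hL0).mp this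
      have := (hkey k).mp hkL
      have : p ≤ ε ^ k * ((1 - ε) * U) := by
        rw [hX] at this
        calc p = p / ((1 - ε) * U) * ((1 - ε) * U) := by field_simp
        _ ≤ ε ^ k * ((1 - ε) * U) := by
            exact mul_le_mul_of_nonneg_right this hden.le
      linarith
    · refine from_on π (⌊L⌋₊ + 1) ?_ n hn.le
      intro k hk
      rw [hinc k]
      have hkL : L < (k : ℝ) := by
        have h1 : L < (⌊L⌋₊ : ℝ) + 1 := Nat.lt_floor_add_one L
        have h2 : ((⌊L⌋₊ + 1 : ℕ) : ℝ) ≤ (k : ℝ) := by exact_mod_cast hk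
        push_cast at h2
        linarith
      have hXk : ε ^ k < X := by
        by_contra hcon
        push_neg at hcon
        exact absurd ((hkey k).mpr hcon) (not_le.mpr hkL)
      have : ε ^ k * ((1 - ε) * U) < p := by
        rw [hX] at hXk
        calc ε ^ k * ((1 - ε) * U) < p / ((1 - ε) * U) * ((1 - ε) * U) :=
          mul_lt_mul_of_pos_right hXk hden
        _ = p := by field_simp
      linarith
  · intro hp n
    rw [hπ, hπ]
    have hpow : 1 - ε ^ n ≤ n * (1 - ε) := by
      induction n with
      | zero => simp
      | succ n ih =>
        have hεn : ε ^ n ≤ 1 := pow_le_one₀ hε0.le hε1.le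
        push_cast
        rw [pow_succ]
        nlinarith
    have h1 : (1 - ε ^ n) * U ≤ n * ((1 - ε) * U) := by nlinarith
    have h2 : (n : ℝ) * ((1 - ε) * U) ≤ n * p :=
      mul_le_mul_of_nonneg_left hp.le (Nat.cast_nonneg n)
    simp only [pow_zero, Nat.cast_zero]
    linarith
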